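/- Let Θ be a Young function with generalized inverse Θ⁻¹(s) = inf{r ≥ 0 : Θ(r) > s}, and let B(a,r) ⊂ ℝⁿ and B(0,r₀) ⊂ ℝⁿ be balls with |B(a,r) ∩ B(0,r₀)| > 0. Then ‖χ_{B(0,r₀)}‖_{wL_Θ(B(a,r))} = 1 / Θ⁻¹( 1 / |B(a,r) ∩ B(0,r₀)| ), where ‖·‖_{wL_Θ(B(a,r))} is the weak Luxemburg quasi-norm restricted to B(a,r). -/

import Mathlib

open MeasureTheory Metric Set ENNReal

noncomputable section

/-- A Young function: convex, continuous, vanishing at 0, nonnegative, tending to ∞. -/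
def IsYoung (Θ : ℝ → ℝ) : Prop :=
  ConvexOn ℝ (Set.Ici 0) Θ ∧ ContinuousOn Θ (Set.Ici 0) ∧ Θ 0 = 0 ∧
  (∀ t, 0 ≤ t → 0 ≤ Θ t) ∧ Filter.Tendsto Θ Filter.atTop Filter.atTop

/-- Generalized inverse Θ⁻¹(s) = inf {r ≥ 0 : Θ r > s}. -/
def invY (Θ : ℝ → ℝ) (s : ℝ) : ℝ := sInf {r : ℝ | 0 ≤ r ∧ s < Θ r}

abbrev En (n : ℕ) := EuclideanSpace ℝ (Fin n)

/-- Luxemburg norm on a set B. -/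
def luxNorm {n : ℕ} (Θ : ℝ → ℝ) (B : Set (En n)) (f : En n → ℝ) : ℝ≥0∞ :=
  sInf {e : ℝ≥0∞ | ∃ b : ℝ, 0 < b ∧ e = ENNReal.ofReal b ∧
    ∫⁻ x in B, ENNReal.ofReal (Θ (|f x| / b)) ∂volume ≤ 1}

/-- Weak Luxemburg quasi-norm on a set B. -/
def wLuxNorm {n : ℕ} (Θ : ℝ → ℝ) (B : Set (En n)) (f : En n → ℝ) : ℝ≥0∞ :=
  sInf {e : ℝ≥0∞ | ∃ b : ℝ, 0 < b ∧ e = ENNReal.ofReal b ∧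
    ∀ t : ℝ, 0 < t → ENNReal.ofReal (Θ t) * volume {x ∈ B | t < |f x| / b} ≤ 1}

/-- Orlicz–Morrey norm (Deringoz–Guliyev–Samko). -/
def morreyNorm (n : ℕ) (θ Θ : ℝ → ℝ) (f : En n → ℝ) : ℝ≥0∞ :=
  ⨆ (a : En n) (r : ℝ) (_ : 0 < r),
    ENNReal.ofReal ((1 / θ ((volume (ball a r)).toReal ^ ((1:ℝ)/n))) *
      invY Θ (1 / (volume (ball a r)).toReal)) * luxNorm Θ (ball a r) f

/-- Weak Orlicz–Morrey quasi-norm. -/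
def wMorreyNorm (n : ℕ) (θ Θ : ℝ → ℝ) (f : En n → ℝ) : ℝ≥0∞ :=
  ⨆ (a : En n) (r : ℝ) (_ : 0 < r),
    ENNReal.ofReal ((1 / θ ((volume (ball a r)).toReal ^ ((1:ℝ)/n))) *
      invY Θ (1 / (volume (ball a r)).toReal)) * wLuxNorm Θ (ball a r) f

/-- The class G_θ : θ positive and decreasing, with t ↦ Θ⁻¹(t^{-n})/θ(t) almost decreasing. -/
def Gclass (n : ℕ) (Θ θ : ℝ → ℝ) : Prop :=
  (∀ t : ℝ, 0 < t → 0 < θ t) ∧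
  (∀ s t : ℝ, 0 < s → s ≤ t → θ t ≤ θ s) ∧
  ∃ C : ℝ, 0 < C ∧ ∀ s t : ℝ, 0 < s → s ≤ t →
    invY Θ (t ^ (-(n:ℝ))) / θ t ≤ C * (invY Θ (s ^ (-(n:ℝ))) / θ s)

/-- Θ₁ ≺ Θ₂. -/
def prec (Θ₁ Θ₂ : ℝ → ℝ) : Prop := ∃ C : ℝ, 0 < C ∧ ∀ t : ℝ, 0 < t → Θ₁ t ≤ Θ₂ (C * t)

/-- Θ₁⁻¹ ≲ Θ₂⁻¹. -/
def invLesssim (Θ₁ Θ₂ : ℝ → ℝ) : Prop :=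
  ∃ C : ℝ, 0 < C ∧ ∀ t : ℝ, 0 < t → invY Θ₁ t ≤ C * invY Θ₂ t

open Topology Filter

namespace Aux

variable {Θ : ℝ → ℝ}

lemma young_mono (hΘ : IsYoung Θ) : MonotoneOn Θ (Set.Ici 0) := by
  obtain ⟨hconv, hcont, h0, hnn, htop⟩ := hΘ
  intro x hx y hy hxy
  rcases eq_or_lt_of_le (Set.mem_Ici.mp hy) with h | hy0
  · have hx0 : x = 0 := le_antisymm (h ▸ hxy) hx
    simp [hx0, ← h]
  · set t := x / y with htdef
    have ht0 : 0 ≤ t := div_nonneg hx hy0.le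
    have ht1 : t ≤ 1 := (div_le_one hy0).mpr hxy
    have hxe : (1 - t) • (0:ℝ) + t • y = x := by
      simp [htdef, smul_eq_mul, div_mul_cancel₀ x hy0.ne']
    calc Θ x = Θ ((1 - t) • (0:ℝ) + t • y) := by rw [hxe]
      _ ≤ (1 - t) * Θ 0 + t * Θ y :=
          hconv.2 (Set.self_mem_Ici) hy (by linarith) ht0 (by ring)
      _ = t * Θ y := by rw [h0]; ring
      _ ≤ Θ y := by nlinarith [hnn y hy]

lemma invY_nonempty (hΘ : IsYoung Θ) (s : ℝ) : {r : ℝ | 0 ≤ r ∧ s < Θ r}.Nonempty := by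
  have h := (hΘ.2.2.2.2.eventually_gt_atTop s).and (Filter.eventually_ge_atTop (0:ℝ))
  obtain ⟨x, h1, h2⟩ := h.exists
  exact ⟨x, h2, h1⟩

lemma le_invY (hΘ : IsYoung Θ) {s c : ℝ} (hc : 0 ≤ c) (h : Θ c ≤ s) : c ≤ invY Θ s := by
  apply le_csInf (invY_nonempty hΘ s)
  rintro x ⟨hx0, hxs⟩
  by_contra hlt
  push_neg at hlt
  exact absurd (young_mono hΘ hx0 hc hlt.le) (by linarith)

lemma theta_le_of_le_invY (hΘ : IsYoung Θ) {s c : ℝ} (hc : 0 < c) (h : c ≤ invY Θ s) :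
    Θ c ≤ s := by
  by_contra hgt
  push_neg at hgt
  have hca : ContinuousAt Θ c := (hΘ.2.1).continuousAt (Ici_mem_nhds hc)
  have h1 : ∀ᶠ x in 𝓝[<] c, s < Θ x :=
    (hca.eventually (eventually_gt_nhds hgt)).filter_mono nhdsWithin_le_nhds
  have h2 : ∀ᶠ x in 𝓝[<] c, 0 < x :=
    (eventually_gt_nhds hc).filter_mono nhdsWithin_le_nhds
  have h3 : ∀ᶠ x in 𝓝[<] c, x < c := eventually_mem_nhdsWithin
  obtain ⟨x, hx1, hx2, hx3⟩ := (h1.and (h2.and h3)).exists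
  have : invY Θ s ≤ x := csInf_le ⟨0, fun y hy => hy.1⟩ ⟨hx2.le, hx1⟩
  linarith

lemma invY_pos (hΘ : IsYoung Θ) {s : ℝ} (hs : 0 < s) : 0 < invY Θ s := by
  have hc : ContinuousWithinAt Θ (Set.Ici 0) 0 := hΘ.2.1 0 Set.self_mem_Ici
  have h0 : Θ 0 = 0 := hΘ.2.2.1
  have h1 : ∀ᶠ x in 𝓝[Set.Ici 0] (0:ℝ), Θ x < s :=
    hc.eventually (eventually_lt_nhds (by rw [h0]; exact hs))
  obtain ⟨δ, hδ, hδh⟩ := Metric.mem_nhdsWithin_iff.mp h1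
  have : δ ≤ invY Θ s := by
    apply le_csInf (invY_nonempty hΘ s)
    rintro x ⟨hx0, hxs⟩
    by_contra hlt
    push_neg at hlt
    have : Θ x < s := hδh ⟨by rw [Metric.mem_ball, Real.dist_eq, sub_zero, abs_of_nonneg hx0]; exact hlt, hx0⟩
    linarith
  linarith

end Aux

theorem stmt16 (n : ℕ) (hn : 0 < n) (Θ : ℝ → ℝ) (hΘ : IsYoung Θ)
    (a : En n) (r r₀ : ℝ) (hr : 0 < r) (hr₀ : 0 < r₀)
    (hpos : 0 < volume (ball a r ∩ ball (0:En n) r₀)) :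
    wLuxNorm Θ (ball a r) ((ball (0:En n) r₀).indicator (fun _ => (1:ℝ))) =
      ENNReal.ofReal (1 / invY Θ (1 / (volume (ball a r ∩ ball (0:En n) r₀)).toReal)) := by
  set B := ball a r with hB
  set B0 := ball (0:En n) r₀ with hB0
  set V := volume (B ∩ B0) with hVdef
  have hVfin : V ≠ ⊤ :=
    (lt_of_le_of_lt (measure_mono Set.inter_subset_left) measure_ball_lt_top).ne
  have hVt : 0 < V.toReal := ENNReal.toReal_pos hpos.ne' hVfin
  set s := 1 / V.toReal with hsdef
  have hs : 0 < s := by positivity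
  set I := invY Θ s with hIdef
  have hIpos : 0 < I := Aux.invY_pos hΘ hs
  have hmul : ∀ t : ℝ, 0 < t → (ENNReal.ofReal (Θ t) * V ≤ 1 ↔ Θ t ≤ s) := by
    intro t ht
    rw [← ENNReal.le_div_iff_mul_le (Or.inl hpos.ne') (Or.inl hVfin),
      ENNReal.ofReal_le_iff_le_toReal (ENNReal.div_lt_top ENNReal.one_ne_top hpos.ne').ne,
      ENNReal.toReal_div, ENNReal.toReal_one, ← hsdef]
  have hset : ∀ b : ℝ, 0 < b → ∀ t : ℝ, 0 < t →
      {x ∈ B | t < |(B0.indicator (fun _ => (1:ℝ))) x| / b} =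
        (if t < 1/b then B ∩ B0 else ∅) := by
    intro b hb t ht
    split_ifs with hcase
    · ext x
      simp only [Set.mem_setOf_eq, Set.mem_inter_iff]
      constructor
      · rintro ⟨hxB, hxt⟩
        refine ⟨hxB, ?_⟩
        by_contra hx0
        rw [Set.indicator_of_notMem hx0] at hxt
        simp only [abs_zero, zero_div] at hxt
        linarith
      · rintro ⟨hxB, hx0⟩
        refine ⟨hxB, ?_⟩
        rw [Set.indicator_of_mem hx0, abs_one]
        exact hcase
    · push_neg at hcase
      ext x
      simp only [Set.mem_setOf_eq, Set.mem_empty_iff_false, iff_false, not_and]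
      intro hxB
      by_cases hx0 : x ∈ B0
      · rw [Set.indicator_of_mem hx0, abs_one]
        linarith
      · rw [Set.indicator_of_notMem hx0]
        simp only [abs_zero, zero_div]
        linarith
  have hcondiff : ∀ b : ℝ, 0 < b →
      ((∀ t : ℝ, 0 < t → ENNReal.ofReal (Θ t) *
        volume {x ∈ B | t < |(B0.indicator (fun _ => (1:ℝ))) x| / b} ≤ 1) ↔ 1/b ≤ I) := by
    intro b hb
    constructor
    · intro hcond
      by_contra hgt
      push_neg at hgt
      set t := (I + 1/b)/2 with htdef
      have ht1 : I < t := by rw [htdef]; linarith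
      have ht2 : t < 1/b := by rw [htdef]; linarith
      have ht0 : 0 < t := lt_trans hIpos ht1
      have hc := hcond t ht0
      rw [hset b hb t ht0, if_pos ht2] at hc
      have hts : Θ t ≤ s := (hmul t ht0).mp hc
      have := Aux.le_invY hΘ ht0.le hts
      rw [← hIdef] at this
      linarith
    · intro hle t ht
      rw [hset b hb t ht]
      split_ifs with hcase
      · exact (hmul t ht).mpr
          (Aux.theta_le_of_le_invY hΘ ht (le_trans hcase.le hle))
      · simp
  rw [wLuxNorm]
  apply le_antisymm
  · apply sInf_le
    refine ⟨1/I, by positivity, rfl, ?_⟩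
    exact (hcondiff (1/I) (by positivity)).mpr (by rw [one_div_one_div])
  · apply le_sInf
    rintro e ⟨b, hb, rfl, hcond⟩
    have h1 : 1/b ≤ I := (hcondiff b hb).mp hcond
    have h2 : 1/I ≤ b := by
      rw [div_le_iff₀ hIpos]
      rw [div_le_iff₀ hb] at h1
      linarith
    exact ENNReal.ofReal_le_ofReal h2
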